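/- The five permutations (1,2)(3,4), (3,6)(4,5), (2,6)(3,4), (2,6)(3,5), (1,2)(4,6) of {1,...,6} generate the alternating group A₆. -/
import Mathlib

namespace Stmt9Aux
open Equiv Subgroup

def g : Fin 5 → Equiv.Perm (Fin 6)
  | 0 => Equiv.swap 0 1 * Equiv.swap 2 3
  | 1 => Equiv.swap 2 5 * Equiv.swap 3 4
  | 2 => Equiv.swap 1 5 * Equiv.swap 2 3
  | 3 => Equiv.swap 1 5 * Equiv.swap 2 4
  | 4 => Equiv.swap 0 1 * Equiv.swap 3 5

def S : Set (Equiv.Perm (Fin 6)) := {g 0, g 1, g 2, g 3, g 4}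

lemma hg (i : Fin 5) : g i ∈ closure S := by
  apply Subgroup.subset_closure
  fin_cases i <;> simp [S]

lemma word_mem (w : List (Fin 5)) : (w.map g).prod ∈ closure S := by
  apply list_prod_mem
  rintro x hx
  rw [List.mem_map] at hx
  obtain ⟨i, -, rfl⟩ := hx
  exact hg i

def W : List (List (Fin 5)) := [[2,1,4,3,0],
  [2,4,1,2],
  [2,1,3,4,2],
  [2,1,4,3],
  [1,2,0,1,3],
  [3,1,3,4,2],
  [2,1,2,0,3],
  [2,0,1,3],
  [1,2,1,4,3],
  [1,2,1,3,4,2],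
  [1,2,4,1,2],
  [1,2,1,4,3,0],
  [2,1,4,2],
  [3,4,2,0],
  [0,1,3,4,3,4],
  [2,1,4,2,0],
  [2,0,3],
  [1,0,1,3],
  [3,4,2],
  [0,2,3,2],
  [4,3,0],
  [2,1,3,4,3],
  [0,3,1,2,4],
  [4,3],
  [3,1,0,2,0],
  [2,4,3],
  [1,3,4,3],
  [3,1,0,2],
  [0,3],
  [1,4,2,0],
  [1,2,4,2],
  [0,3,0],
  [1,0,2],
  [1,3,4,3,0],
  [1,4,2],
  [1,0,2,0],
  [3,4,3],
  [1,2,4,3],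
  [4,0,3,4,3],
  [3,4,3,0],
  [0,2,0],
  [4,2],
  [2,4,2],
  [0,2],
  [1,0,3,0],
  [0,4,2,4,2],
  [4,2,0],
  [1,0,3],
  [0,1,0,2,4,3],
  [1,3,4,2,0],
  [0,4,2,4,3],
  [0,1,4,3,4,2],
  [1,4,3],
  [0,1,3,0],
  [1,3,4,2],
  [1,4,3,0],
  [4,1,2],
  [4,0,3,4,2],
  [0,1,3],
  [1,2,0,3],
  [0,2,1,4,3],
  [3,4,2,4,1],
  [0,3,1,3,4,2],
  [0,2,1,4,3,0],
  [0,2,4,1,2],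
  [0,2,1,3,4,2],
  [0,2,0,1,3],
  [2,4,2,4,1],
  [4,2,0,1,3],
  [4,2,1,4,3],
  [1,3,4,2,4,1],
  [1,0,2,1,4,3],
  [1,4,2,4,3],
  [0,2,4,3],
  [0,1,3,4,3],
  [0,3,1,0,2],
  [3],
  [0,1,4,2,0],
  [4,3,4,2],
  [3,0],
  [0,1,0,2],
  [0,1,3,4,3,0],
  [0,1,4,2],
  [2,1,2,4],
  [0,2,1,4,2],
  [2,4,3,4],
  [1,3,4,3,4],
  [1,4,2,4,2],
  [0,2,0,3],
  [1,4,0,2],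
  [0,3,4,2],
  [2,3,2],
  [1,2,0],
  [1,0,2,4,2],
  [3,1,2,4],
  [1,2],
  [3,4,3,4],
  [0,3,4,3],
  [4,1,2,4,3],
  [0,2,4,2],
  [2],
  [4,0,2,0],
  [0,3,4,3,0],
  [2,0],
  [0,4,2],
  [4,2,4,2],
  [4,0,2],
  [0,4,2,0],
  [0,1,3,4,2,0],
  [1,0,2,4,3],
  [4,2,4,3],
  [0,1,3,4,2],
  [0,1,4,3,0],
  [4,0,3],
  [1,4,3,4,2],
  [0,1,4,3],
  [1,3,0],
  [4,1,2,4,2],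
  [4,0,3,0],
  [1,3],
  [0,2,1,4,3,4],
  [0,3,4,3,1,2],
  [3,4,2,4,3,1],
  [2,4,3,1,3],
  [0,2,1,3,2],
  [1,4,2,4,1],
  [3,4,3,4,1],
  [0,2,4,1],
  [1,0,3,1,3],
  [0,1,3,4,2,0,1],
  [4,1,2,1,3],
  [0,1,3,4,1],
  [2,4,3,1,2],
  [2,4,1,2,4],
  [1,3,4,2,4,3],
  [2,1,4,2,1,4],
  [2,4,2,3],
  [1,2,1,3],
  [3,4,3,1],
  [2,0,4,1],
  [1,3,1,3,0],
  [4,2,4,3,1,3],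
  [3,1,3,4],
  [1,3,1,3],
  [3,1,0,2,4],
  [0,3,4],
  [0,3,1,3,1],
  [2,1,4,3,1],
  [2,0,1,0],
  [1,4,0,2,4],
  [0,2,1],
  [2,0,1],
  [1],
  [1,4,3,0,1],
  [0,1,4,3,1],
  [1,0],
  [3,4,3,0,4],
  [0,2,0,4],
  [4,2,4],
  [0,2,4,2,4],
  [2,4],
  [1,3,1,2],
  [0,3,0,1],
  [2,4,0],
  [0,4,0],
  [0,1,3,1],
  [1,3,1,2,0],
  [0,4],
  [4,2,1,4,3,1],
  [1,4,3,4],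
  [0,1,3,0,4],
  [0,1,3,4,2,4],
  [1,2,1,2],
  [4,0,3,4],
  [1,4,2,1],
  [1,2,1,2,0],
  [1,3,2],
  [4,2,0,1],
  [4,0,2,1],
  [4,1],
  [0,2,4,3,1,2],
  [0,2,4,1,2,4],
  [0,1,3,4,2,4,3],
  [1,4,2,4,3,1],
  [0,2,4,2,3],
  [4,3,1,3],
  [0,3,4,3,1],
  [4,2,1,3],
  [1,0,3,4,1],
  [1,0,2,4,3,1],
  [0,3,1,3,4],
  [0,1,3,1,3],
  [2,1,4,3,4],
  [3,4,3,1,2],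
  [3,1,3,4,2,4],
  [2,1,4,2,1],
  [2,1,3,2],
  [1,2,1,3,4],
  [1,2,4,3,1],
  [2,4,1],
  [1,2,4,1,4],
  [1,3,4,2,0,1],
  [1,2,1,2,1],
  [1,3,4,1],
  [0,2,1,4,3,1],
  [2,0,3,4],
  [1,0,1,3,4],
  [0,3,1,0,2,4],
  [3,4],
  [3,1,3,1],
  [0,2,0,1],
  [2,1],
  [0,1],
  [1,4,3,1],
  [3,0,4,2,4],
  [0,1,0],
  [2,4,2,4],
  [0,2,4],
  [0,1,3,1,2],
  [2,0,1,3,1],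
  [2,0,4],
  [0,4,2,4],
  [0,2,4,0],
  [3,0,1],
  [4,0],
  [1,0,2,1,4],
  [1,3,1],
  [4],
  [1,3,4,2,4],
  [4,3,1,2],
  [4,1,2,4],
  [1,2,4,1,2,1],
  [0,1,4,3,4],
  [1,3,0,4],
  [1,4,2,1,4],
  [0,1,4,2,1],
  [4,2,3],
  [1,0,3,1],
  [1,2,1,4],
  [0,4,1],
  [0,2,0,1,3,4],
  [2,1,4,3,1,3],
  [2,4,2,4,3,1],
  [0,2,4,3,1],
  [0,2,4,1,4],
  [4,3,4,1],
  [2,4,3,4,1],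
  [0,3,4,1],
  [0,2,1,2,1],
  [4,2,4,3,1],
  [1,4,3,1,3],
  [0,2,1,3,4],
  [2,1,2,0,3,4],
  [2,0,1,3,4],
  [1,2,1,4,3,4],
  [3,4,2,0,1],
  [3,4,1],
  [2,1,2,1],
  [2,4,3,1],
  [2,4,1,4],
  [1,2,4,1],
  [0,4,2,4,3,1],
  [2,1,3,4],
  [1,2,1,3,2],
  [3,4,2,4],
  [0,3,1,0],
  [4,3,0,4],
  [2,4,1,2,1],
  [3,0,4],
  [0,1,0,2,4],
  [0,3,1],
  [2,1,4],
  [0,1,4],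
  [4,2,1,4],
  [4,0,3,1],
  [3,2,4],
  [1,2,4,2,4],
  [0,3,0,4],
  [1,0,2,4],
  [0,3,4,2,4],
  [3,1,0],
  [1,2,0,4],
  [0,2,1,4],
  [3,1],
  [1,4],
  [4,1,2,1],
  [1,3,0,1],
  [1,4,0],
  [4,0,3,4,2,4],
  [0,1,3,4],
  [1,2,0,3,4],
  [4,1,2,4,2,4],
  [1,3,1,3,1],
  [1,3,4],
  [4,3,1],
  [2,1,2,4,1],
  [4,1,4],
  [1,0,2,0,1],
  [1,2,1],
  [1,0,1],
  [4,2,1,4,3,4],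
  [0,3,4,2,4,3],
  [0,2,4,2,4,3],
  [0,1,3,4,3,1],
  [0,3,1,3,0],
  [0,2,4,0,3],
  [1,3,4,3,4,1],
  [0,3,1,3],
  [0,2,1,3,0],
  [1,2,4,3,1,3],
  [4,2,4,1],
  [0,2,1,3],
  [3,4,2,4,3],
  [1,2,4,1,2,4],
  [2,4,2,4,3],
  [2,1,4,3,4,2],
  [3,1,3],
  [2,1,3,0],
  [1,3,4,3,1],
  [3,1,3,0],
  [2,4,0,3],
  [2,4,1,2,4,2],
  [2,1,3],
  [0,4,2,4,1],
  [2,1,3,4,3,4],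
  [0,3,1,2],
  [4,3,4],
  [3,4,2,4,2],
  [0,1,4,2,4],
  [2,1,2],
  [0,3,1,2,0],
  [3,0,4,2],
  [0,2,3],
  [4,2,1],
  [2,1,2,0],
  [3,2],
  [0,3,4,2,4,2],
  [1,4,2,4],
  [0,2,1,2],
  [1,0,2,4,2,4],
  [3,1,2],
  [1,2,4],
  [0,3,0,4,2],
  [3,1,2,0],
  [2,3],
  [0,2,1,2,0],
  [0,4,2,1],
  [0,3,2],
  [0,2,4,2,4,2],
  [4,2,0,4],
  [1,0,3,4],
  [2,4,2,4,2],
  [4,0,2,4],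
  [2,4,0,2],
  [4,3,0,1],
  [2,0,4,2],
  [0],
  [1,0,2,1],
  [1,2,0,1],
  []]

def L : List (Equiv.Perm (Fin 6)) := W.map (fun w => (w.map g).prod)

def enc : Equiv.Perm (Fin 6) → ℕ := fun p =>
  (p 0).val + 6 * (p 1).val + 36 * (p 2).val + 216 * (p 3).val +
    1296 * (p 4).val + 7776 * (p 5).val

def N : List ℕ := [1870, 1895, 1935, 2045, 2120, 2140, 2265, 2285, 2360, 2470, 2510, 2535, 2945, 2985, 3010, 3310, 3395, 3445, 3515, 3595, 3645, 3735, 3790, 3835, 4210, 4265, 4310, 4385, 4495, 4510, 4820, 4835, 4945, 5020, 5065, 5120, 5495, 5540, 5595, 5685, 5735, 5815, 5885, 5935, 6020, 6320, 6345, 6385, 6795, 6820, 6860, 6970, 7045, 7065, 7190, 7210, 7285, 7395, 7435, 7460, 8345, 8385, 8410, 8530, 8585, 8630, 8735, 8780, 8835, 8955, 8980, 9020, 10510, 10535, 10575, 11045, 11190, 11200, 11265, 11345, 11430, 11470, 11580, 11595, 11765, 11840, 11860, 12130, 12245, 12300, 12545, 12630, 12710, 12770, 12820, 12900, 13065, 13085,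 13160, 13415, 13530, 13575, 13640, 13685, 13800, 14055, 14130, 14150, 14350, 14390, 14415, 14715, 14800, 14850, 14920, 15000, 15050, 15140, 15195, 15240, 15910, 15935, 15975, 16265, 16375, 16390, 16485, 16535, 16615, 16690, 16765, 16785, 16985, 17025, 17050, 17530, 17645, 17700, 17735, 17850, 17895, 17955, 18040, 18090, 19510, 19595, 19645, 19685, 19830, 19840, 20335, 20345, 20490, 20530, 20580, 20665, 20795, 20875, 20925, 20985, 21065, 21150, 21395, 21450, 21565, 21835, 21855, 21930, 22095, 22150, 22195, 22270, 22380, 22395, 22705, 22720, 22830, 22905, 22950, 23005, 23645, 23720, 23740, 23830, 23915, 23965, 24245, 24295, 24380, 24470, 24490, 24565, 24730, 24785, 24830, 25085, 25230, 25240, 25520, 25565, 25680, 25720, 25800, 25850, 25985, 26095, 26110, 26170, 26285, 26340, 26795, 26850, 26965, 27025, 27040, 27150, 28580, 28595, 28705, 28745, 28830, 28910, 28975, 28985, 29130, 29600, 29640, 29665, 29860, 29905, 29960, 30050, 30100, 30180, 30250, 30300, 30385, 30685, 30710, 30750, 31425, 31445, 31520, 31595, 31675, 31725, 31820, 31835,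 31945, 32235, 32275, 32300, 32495, 32540, 32595, 32865, 32945, 33030, 33065, 33150, 33230, 33500, 33555, 33600, 33765, 33815, 33895, 33935, 34050, 34095, 34375, 34385, 34530, 34785, 34830, 34885, 35045, 35095, 35180, 35240, 35285, 35400, 35435, 35490, 35605, 36085, 36110, 36150, 37640, 37665, 37705, 37815, 37890, 37910, 38035, 38055, 38130, 38240, 38280, 38305, 39190, 39230, 39255, 39375, 39430, 39475, 39580, 39625, 39680, 39800, 39825, 39865, 40275, 40300, 40340, 40630, 40740, 40755, 40850, 40900, 40980, 41055, 41130, 41150, 41530, 41605, 41625, 41715, 41800, 41850, 42130, 42180, 42265, 42355, 42375, 42450, 42830, 42850, 42925, 43000, 43080, 43130, 43225, 43240, 43350, 43640, 43680, 43705, 44115, 44155, 44180, 44300, 44355, 44400, 44505, 44550, 44605, 44725, 44750, 44790]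

set_option maxRecDepth 100000 in
lemma hmap : L.map enc = N := by decide

set_option maxRecDepth 100000 in
lemma hchain : List.Pairwise (· < ·) N := by decide

lemma hNnodup : N.Nodup :=
  hchain.imp ne_of_lt

lemma hLnodup : L.Nodup := by
  have := hmap ▸ hNnodup
  exact this.of_map enc

def F : Finset (Equiv.Perm (Fin 6)) := L.toFinset

set_option maxRecDepth 100000 in
lemma hFcard : F.card = 360 := by
  rw [F, List.toFinset_card_of_nodup hLnodup]
  rfl

lemma hFsub : (F : Set (Equiv.Perm (Fin 6))) ⊆ (closure S : Set (Equiv.Perm (Fin 6))) := by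
  intro x hx
  rw [F, List.coe_toFinset, Set.mem_setOf_eq] at hx
  rw [L, List.mem_map] at hx
  obtain ⟨w, -, rfl⟩ := hx
  exact word_mem w

end Stmt9Aux

theorem stmt9 :
    Subgroup.closure
      ({Equiv.swap 0 1 * Equiv.swap 2 3,
        Equiv.swap 2 5 * Equiv.swap 3 4,
        Equiv.swap 1 5 * Equiv.swap 2 3,
        Equiv.swap 1 5 * Equiv.swap 2 4,
        Equiv.swap 0 1 * Equiv.swap 3 5} : Set (Equiv.Perm (Fin 6))) =
      alternatingGroup (Fin 6) := by
  have hSeq : ({Equiv.swap 0 1 * Equiv.swap 2 3,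
        Equiv.swap 2 5 * Equiv.swap 3 4,
        Equiv.swap 1 5 * Equiv.swap 2 3,
        Equiv.swap 1 5 * Equiv.swap 2 4,
        Equiv.swap 0 1 * Equiv.swap 3 5} : Set (Equiv.Perm (Fin 6))) = Stmt9Aux.S := rfl
  rw [hSeq]
  apply Subgroup.eq_of_le_of_card_ge
  · rw [Subgroup.closure_le]
    intro x hx
    simp only [Stmt9Aux.S, Set.mem_insert_iff, Set.mem_singleton_iff] at hx
    rcases hx with rfl | rfl | rfl | rfl | rfl <;>
      exact Equiv.Perm.mem_alternatingGroup.mpr (by decide)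
  · have hA : Nat.card (alternatingGroup (Fin 6)) = 360 := by
      have h2 := @two_mul_card_alternatingGroup (Fin 6) _ _ _
      have hp : Fintype.card (Equiv.Perm (Fin 6)) = 720 := by
        rw [Fintype.card_perm]; rfl
      rw [Nat.card_eq_fintype_card]
      omega
    have h1 : (Stmt9Aux.F : Set (Equiv.Perm (Fin 6))).ncard ≤
        ((Subgroup.closure Stmt9Aux.S : Subgroup (Equiv.Perm (Fin 6))) :
          Set (Equiv.Perm (Fin 6))).ncard :=
      Set.ncard_le_ncard Stmt9Aux.hFsub (Set.toFinite _)
    rw [Set.ncard_coe_finset, Stmt9Aux.hFcard] at h1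
    rw [hA, ← Nat.card_coe_set_eq] at *
    simpa using h1
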